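/- In the commutative idempotent ω-continuous semiring, for the single equation x = a*x*x + b (one variable, a,b constants), the least fixed point equals ⊕ over all binary trees of the corresponding yield, and equals the supremum of the Kleene iterates f^n(0) where f(x) = a*x*x + b. -/

import Mathlib

/-- An idempotent ω-continuous semiring structure on `S`: addition is
idempotent, and there is a countable-sum operation `ssum` which is the supremum
(wrt the natural order `a ≤ b ↔ a + b = b`) of the finite partial sums, and
over which multiplication distributes on both sides. -/
structure IdemOmegaSemiring (S : Type*) [Semiring S] where
  /-- addition is idempotent -/
  idem : ∀ a : S, a + a = a
  /-- countable sums -/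
  ssum : (ℕ → S) → S
  /-- `ssum f` is an upper bound of the finite partial sums -/
  ssum_ub : ∀ (f : ℕ → S) (n : ℕ), (∑ i ∈ Finset.range n, f i) + ssum f = ssum f
  /-- `ssum f` is the least upper bound of the finite partial sums -/
  ssum_least : ∀ (f : ℕ → S) (b : S),
    (∀ n : ℕ, (∑ i ∈ Finset.range n, f i) + b = b) → ssum f + b = b
  /-- multiplication distributes over countable sums from the left -/
  mul_ssum : ∀ (c : S) (f : ℕ → S), c * ssum f = ssum fun i => c * f i
  /-- multiplication distributes over countable sums from the right -/
  ssum_mul : ∀ (c : S) (f : ℕ → S), ssum f * c = ssum fun i => f i * c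

/-- Binary derivation trees for the equation `x = a*x*x + b`. -/
inductive BTree where
  | leaf : BTree
  | node : BTree → BTree → BTree

/-- Yield of a binary tree: leaves yield `b`, an internal node contributes a
factor `a` and multiplies the yields of its subtrees. -/
def BTree.yield {S : Type*} [CommSemiring S] (a b : S) : BTree → S
  | .leaf => b
  | .node l r => a * l.yield a b * r.yield a b

section Aux

/-- Height of a binary tree. -/
def BTree.height : BTree → ℕ
  | .leaf => 0
  | .node l r => max l.height r.height + 1

variable {S : Type*} [CommSemiring S]

/-- The natural order on an idempotent semiring. -/
def sle (x y : S) : Prop := x + y = y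

lemma sle_trans {x y z : S} (h1 : sle x y) (h2 : sle y z) : sle x z := by
  unfold sle at *; rw [← h2, ← add_assoc, h1]

lemma sle_add {x y z : S} (h1 : sle x z) (h2 : sle y z) : sle (x + y) z := by
  unfold sle at *; rw [add_assoc, h2, h1]

lemma sle_add_add {x y z w : S} (h1 : sle x y) (h2 : sle z w) :
    sle (x + z) (y + w) := by
  unfold sle at *
  calc x + z + (y + w) = (x + y) + (z + w) := by ring
  _ = y + w := by rw [h1, h2]

lemma sle_mul_left {x y : S} (c : S) (h : sle x y) : sle (c * x) (c * y) := by
  unfold sle at *; rw [← mul_add, h]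

lemma sle_mul_right {x y : S} (c : S) (h : sle x y) : sle (x * c) (y * c) := by
  unfold sle at *; rw [← add_mul, h]

lemma sle_zero (x : S) : sle 0 x := zero_add x

lemma sle_add_left (Ω : IdemOmegaSemiring S) (x y : S) : sle x (x + y) := by
  unfold sle
  calc x + (x + y) = (x + x) + y := by ring
  _ = x + y := by rw [Ω.idem]

lemma sle_add_right (Ω : IdemOmegaSemiring S) (x y : S) : sle x (y + x) := by
  unfold sle
  calc x + (y + x) = y + (x + x) := by ring
  _ = y + x := by rw [Ω.idem]

lemma term_sle_ssum (Ω : IdemOmegaSemiring S) (f : ℕ → S) (n : ℕ) :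
    sle (f n) (Ω.ssum f) := by
  have h1 : sle (f n) (∑ i ∈ Finset.range (n + 1), f i) := by
    unfold sle
    rw [Finset.sum_range_succ]
    calc f n + (∑ i ∈ Finset.range n, f i + f n)
        = ∑ i ∈ Finset.range n, f i + (f n + f n) := by ring
      _ = _ := by rw [Ω.idem]
  exact sle_trans h1 (Ω.ssum_ub f (n + 1))

lemma ssum_sle (Ω : IdemOmegaSemiring S) (f : ℕ → S) (x : S)
    (h : ∀ n, sle (f n) x) : sle (Ω.ssum f) x := by
  apply Ω.ssum_least
  intro n
  induction n with
  | zero => simp only [Finset.range_zero, Finset.sum_empty]; exact sle_zero x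
  | succ n ih =>
    rw [Finset.sum_range_succ]
    exact sle_add ih (h n)

lemma sle_antisymm {x y : S} (h1 : sle x y) (h2 : sle y x) : x = y := by
  unfold sle at *; rw [← h2, add_comm, h1]

lemma f_mono (Ω : IdemOmegaSemiring S) (a b : S) {x y : S} (h : sle x y) :
    sle (a * x * x + b) (a * y * y + b) := by
  have h1 : sle (a * x * x) (a * y * y) :=
    sle_trans (sle_mul_left (a * x) h) (sle_mul_right y (sle_mul_left a h))
  exact sle_add_add h1 (Ω.idem b)

end Aux

/-- In a commutative idempotent ω-continuous semiring, for the single equation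
`x = a*x*x + b`, the countable sum `L` of the yields of all binary trees is the
least fixed point of `f x = a*x*x + b`, and it is the supremum of the Kleene
iterates `f^[n] 0` (where `x ≤ y` abbreviates `x + y = y`). -/
theorem lfp_eq_tree_sum_eq_kleene_sup {S : Type*} [CommSemiring S]
    (Ω : IdemOmegaSemiring S) (a b : S)
    (e : ℕ → BTree) (he : Function.Surjective e) :
    let f : S → S := fun x => a * x * x + b
    let L : S := Ω.ssum fun n => (e n).yield a b
    f L = L ∧ (∀ x : S, f x = x → L + x = x) ∧
    (∀ n : ℕ, f^[n] 0 + L = L) ∧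
    (∀ x : S, (∀ n : ℕ, f^[n] 0 + x = x) → L + x = x) := by
  intro f L
  have hfm : ∀ {x y : S}, sle x y → sle (f x) (f y) := fun h => f_mono Ω a b h
  -- every tree yield is below L
  have htree : ∀ t : BTree, sle (t.yield a b) L := by
    intro t
    obtain ⟨n, rfl⟩ := he t
    exact term_sle_ssum Ω (fun n => (e n).yield a b) n
  -- f L = L
  have hfix : f L = L := by
    apply sle_antisymm
    · -- f L ≤ L
      apply sle_add
      · -- a * L * L ≤ L
        have h1 : a * L * L = Ω.ssum fun i =>
            Ω.ssum fun j => a * (e i).yield a b * (e j).yield a b := by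
          rw [show a * L * L = Ω.ssum (fun i => a * (e i).yield a b) * L by
                rw [← Ω.mul_ssum], Ω.ssum_mul]
          congr 1; funext i
          rw [Ω.mul_ssum]
        rw [h1]
        apply ssum_sle
        intro i
        apply ssum_sle
        intro j
        exact htree (BTree.node (e i) (e j))
      · exact htree BTree.leaf
    · -- L ≤ f L
      apply ssum_sle
      intro n
      have : ∀ t : BTree, sle (t.yield a b) (f L) := by
        intro t
        cases t with
        | leaf => exact sle_add_right Ω b (a * L * L)
        | node l r =>
          have h1 : sle (a * l.yield a b * r.yield a b) (a * L * L) :=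
            sle_trans (sle_mul_left _ (htree r)) (sle_mul_right L
              (sle_mul_left a (htree l)))
          exact sle_trans h1 (sle_add_left Ω (a * L * L) b)
      exact this (e n)
  refine ⟨hfix, ?_, ?_, ?_⟩
  · -- least fixed point
    intro x hx
    have hiter : ∀ n : ℕ, sle (f^[n] 0) x := by
      intro n
      induction n with
      | zero => exact sle_zero x
      | succ n ih =>
        rw [Function.iterate_succ_apply']
        exact hx ▸ hfm ih
    -- use the sup property
    apply ssum_sle
    intro n
    have hle : ∀ t : BTree, sle (t.yield a b) x := by
      intro t
      induction t with
      | leaf =>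
        have : sle b x := by
          have := hiter 1
          simpa [f] using this
        exact this
      | node l r ihl ihr =>
        have h1 : sle (a * l.yield a b * r.yield a b) (a * x * x) :=
          sle_trans (sle_mul_left _ ihr)
            (sle_mul_right x (sle_mul_left a ihl))
        have h2 : sle (a * x * x) x := by
          have h3 : sle (a * x * x) (f x) := sle_add_left Ω (a * x * x) b
          rwa [hx] at h3
        exact sle_trans h1 h2
    exact hle (e n)
  · -- Kleene iterates below L
    intro n
    induction n with
    | zero => exact sle_zero L
    | succ n ih =>
      rw [Function.iterate_succ_apply']
      exact hfix ▸ hfm ih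
  · -- L below any upper bound of the Kleene iterates
    intro x hx
    -- iterates form a chain
    have hchain : ∀ n : ℕ, sle (f^[n] 0) (f^[n + 1] 0) := by
      intro n
      induction n with
      | zero => exact sle_zero _
      | succ n ih =>
        rw [Function.iterate_succ_apply', Function.iterate_succ_apply']
        exact hfm ih
    have hmono : ∀ m n : ℕ, m ≤ n → sle (f^[m] 0) (f^[n] 0) := by
      intro m n hmn
      induction n, hmn using Nat.le_induction with
      | base => exact Ω.idem _
      | succ n hmn ih => exact sle_trans ih (hchain n)
    -- each yield is below some iterate
    have hyield : ∀ t : BTree, sle (t.yield a b) (f^[t.height + 1] 0) := by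
      intro t
      induction t with
      | leaf =>
        show sle b (f^[1] 0)
        simp only [Function.iterate_one]
        show sle b (a * 0 * 0 + b)
        simpa [sle] using Ω.idem b
      | node l r ihl ihr =>
        set M := max l.height r.height with hM
        have hl : sle (l.yield a b) (f^[M + 1] 0) :=
          sle_trans ihl (hmono _ _ (by omega))
        have hr : sle (r.yield a b) (f^[M + 1] 0) :=
          sle_trans ihr (hmono _ _ (by omega))
        have h1 : sle (a * l.yield a b * r.yield a b)
            (a * f^[M + 1] 0 * f^[M + 1] 0) :=
          sle_trans (sle_mul_left _ hr)
            (sle_mul_right _ (sle_mul_left a hl))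
        have h2 : sle (a * f^[M + 1] 0 * f^[M + 1] 0) (f^[M + 2] 0) := by
          have : f^[M + 2] 0 = f (f^[M + 1] 0) := by
            rw [Function.iterate_succ_apply']
          rw [this]
          show sle (a * f^[M + 1] 0 * f^[M + 1] 0)
            (a * f^[M + 1] 0 * f^[M + 1] 0 + b)
          unfold sle
          set c := a * f^[M + 1] 0 * f^[M + 1] 0
          calc c + (c + b) = (c + c) + b := by ring
            _ = c + b := by rw [Ω.idem]
        show sle (a * l.yield a b * r.yield a b) (f^[(BTree.node l r).height + 1] 0)
        have hh : (BTree.node l r).height + 1 = M + 2 := by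
          simp [BTree.height, hM]
        rw [hh]
        exact sle_trans h1 h2
    apply ssum_sle
    intro n
    exact sle_trans (hyield (e n)) (hx _)
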